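/- Let v be an irreducible Llull matrix with CLC structure on (S, ξ) and let φ be the Zermelo strengths, i.e., the unique φ in the open simplex maximizing F(φ) = ∏_{{x,y}} φ_x^{v_{xy}} φ_y^{v_{yx}}/(φ_x+φ_y)^{t_{xy}}. Then φ_x > φ_y implies ρ_x > ρ_y, where ρ_x = (1/(N−1)) Σ_{z≠x} v_{xz} are the mean preference scores. -/

import Mathlib

/-- The minimum score along a path `x, z₁, …, zₖ, y` (the list gives the
intermediate points; the empty list is the direct link from `x` to `y`). -/
def chainMin {S : Type*} (v : S → S → ℝ) : S → List S → S → ℝ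
  | x, [], y => v x y
  | x, z :: l, y => min (v x z) (chainMin v z l y)

/-- Indirect (max-min) score: supremum over all paths from `x` to `y`
of the minimum direct score along the path. -/
noncomputable def iScore {S : Type*} (v : S → S → ℝ) (x y : S) : ℝ :=
  sSup {r : ℝ | ∃ l : List S, r = chainMin v x l y}

/-- A Llull matrix: preference scores in `[0,1]` with `v x y + v y x ≤ 1`. -/
def IsLlull {S : Type*} (v : S → S → ℝ) : Prop :=
  ∀ x y : S, x ≠ y → 0 ≤ v x y ∧ v x y ≤ 1 ∧ v x y + v y x ≤ 1


/-- CLC structure with respect to the linear order on `S` (the admissible order ξ):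
(1) `v x y ≥ v y x` for `x < y`; (2) `v x z = max (v x y) (v y z)` and
(3) `v z x = min (v z y) (v y x)` for `x < y < z`; (4) `0 ≤ t x z − t x' z ≤ m x x'`
for `z ∉ {x, x'}` where `x'` is the immediate successor (`x ⋖ x'`),
`t x y = v x y + v y x` and `m x y = v x y − v y x`. -/
def CLC {S : Type*} [LinearOrder S] (v : S → S → ℝ) : Prop :=
  (∀ x y : S, x < y → v y x ≤ v x y) ∧
  (∀ x y z : S, x < y → y < z → v x z = max (v x y) (v y z)) ∧
  (∀ x y z : S, x < y → y < z → v z x = min (v z y) (v y x)) ∧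
  (∀ x x' z : S, x ⋖ x' → z ≠ x → z ≠ x' →
    0 ≤ (v x z + v z x) - (v x' z + v z x') ∧
    (v x z + v z x) - (v x' z + v z x') ≤ v x x' - v x' x)

/-- Zermelo's likelihood function, as a product over ordered pairs. -/
noncomputable def Zf {S : Type*} [Fintype S] [DecidableEq S]
    (v : S → S → ℝ) (φ : S → ℝ) : ℝ :=
  ∏ x, ∏ y ∈ Finset.univ.erase x, (φ x) ^ (v x y) / (φ x + φ y) ^ (v x y)

/-- The open simplex of normalized positive strength vectors. -/
def simplexPos (S : Type*) [Fintype S] : Set (S → ℝ) :=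
  {φ | (∀ x, 0 < φ x) ∧ ∑ x, φ x = 1}

/-- Mean preference score `ρ x = (1/(N−1)) Σ_{z≠x} v x z`. -/
noncomputable def mps {S : Type*} [Fintype S] [DecidableEq S]
    (v : S → S → ℝ) (x : S) : ℝ :=
  ((Fintype.card S : ℝ) - 1)⁻¹ * ∑ z ∈ Finset.univ.erase x, v x z

open Finset

namespace Stmt19

variable {S : Type*}

/-! ### Irreducibility: every row has a positive entry -/

lemma exists_pos_entry [Fintype S] (hS : 2 ≤ Fintype.card S) (v : S → S → ℝ)
    (hirr : ∀ x y : S, x ≠ y → 0 < iScore v x y) (a : S) :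
    ∃ z, z ≠ a ∧ 0 < v a z := by
  by_contra hcon
  push_neg at hcon
  obtain ⟨b, hb⟩ := Fintype.exists_ne_of_one_lt_card (by omega) a
  have key : ∀ l : List S, chainMin v a l b ≤ 0 := by
    intro l
    induction l with
    | nil => exact hcon b hb
    | cons z l ih =>
      rcases eq_or_ne z a with rfl | hza
      · exact le_trans (min_le_right _ _) ih
      · exact le_trans (min_le_left _ _) (hcon z hza)
  have : iScore v a b ≤ 0 := by
    apply Real.sSup_le _ le_rfl
    rintro r ⟨l, rfl⟩
    exact key l
  exact absurd (hirr a b (Ne.symm hb)) (by linarith)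

/-! ### Swap symmetry of off-diagonal double sums -/

lemma sum_erase_swap [Fintype S] [DecidableEq S] (f : S → S → ℝ) :
    ∑ x, ∑ y ∈ Finset.univ.erase x, f x y = ∑ x, ∑ y ∈ Finset.univ.erase x, f y x := by
  have h : ∀ g : S → S → ℝ, ∀ x : S,
      ∑ y ∈ Finset.univ.erase x, g x y = ∑ y, if y ≠ x then g x y else 0 := by
    intro g x; rw [← Finset.sum_filter, Finset.filter_ne']
  simp_rw [h f, h (fun x y => f y x)]
  rw [Finset.sum_comm]
  apply Finset.sum_congr rfl; intro y _
  apply Finset.sum_congr rfl; intro x _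
  rcases eq_or_ne y x with rfl | hyx
  · simp
  · rw [if_pos hyx, if_pos (Ne.symm hyx)]

end Stmt19

section part2
open Finset
namespace Stmt19

noncomputable def Lf {S : Type*} [Fintype S] [DecidableEq S] (v : S → S → ℝ) (ψ : S → ℝ) : ℝ :=
  ∑ x, ∑ y ∈ Finset.univ.erase x, v x y * (Real.log (ψ x) - Real.log (ψ x + ψ y))

lemma Zf_eq_exp_Lf {S : Type*} [Fintype S] [DecidableEq S] (v : S → S → ℝ) (ψ : S → ℝ)
    (hψ : ∀ a, 0 < ψ a) : Zf v ψ = Real.exp (Lf v ψ) := by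
  unfold Zf Lf
  rw [Real.exp_sum]
  apply Finset.prod_congr rfl; intro x _
  rw [Real.exp_sum]
  apply Finset.prod_congr rfl; intro y _
  have h1 : (0:ℝ) < ψ x := hψ x
  have h2 : (0:ℝ) < ψ x + ψ y := by have := hψ y; linarith
  rw [Real.rpow_def_of_pos h1, Real.rpow_def_of_pos h2, ← Real.exp_sub]
  ring_nf

end Stmt19
end part2

section part3
open Finset
namespace Stmt19

lemma stationarity {S : Type*} [Fintype S] [DecidableEq S] (v : S → S → ℝ)
    (φ : S → ℝ) (hφ : φ ∈ simplexPos S)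
    (hmax : ∀ ψ ∈ simplexPos S, Zf v ψ ≤ Zf v φ) (a : S) :
    ∑ z ∈ Finset.univ.erase a, v a z
      = ∑ z ∈ Finset.univ.erase a, (v a z + v z a) * (φ a / (φ a + φ z)) := by
  obtain ⟨hpos, hsum⟩ := hφ
  have hsumpos : ∀ x z : S, (0:ℝ) < φ x + φ z := fun x z => by
    have := hpos x; have := hpos z; linarith
  set G : S → ℝ := fun r =>
    (∑ z ∈ Finset.univ.erase r, v r z / φ r)
    - (∑ z ∈ Finset.univ.erase r, v r z / (φ r + φ z))
    - (∑ z ∈ Finset.univ.erase r, v z r / (φ z + φ r)) with hGdef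
  -- Step A: G is constant
  have hGpq : ∀ p q : S, G p = G q := by
    intro p q
    rcases eq_or_ne p q with rfl | hpq
    · rfl
    set d : S → ℝ := fun z => (if z = p then (1:ℝ) else 0) - (if z = q then 1 else 0) with hd
    have hdp : d p = 1 := by simp [hd, hpq]
    have hdq : d q = -1 := by simp [hd, Ne.symm hpq]
    have hd0 : ∀ z, z ≠ p → z ≠ q → d z = 0 := by intro z h1 h2; simp [hd, h1, h2]
    have hsumd : ∑ z, d z = 0 := by
      simp [hd, Finset.sum_sub_distrib, Finset.sum_ite_eq']
    have hmem : ∀ ε ∈ Set.Ioo (-(φ p)) (φ q), (fun z => φ z + ε * d z) ∈ simplexPos S := by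
      intro ε hε
      constructor
      · intro z
        show 0 < φ z + ε * d z
        rcases eq_or_ne z p with rfl | hzp
        · rw [hdp]; have := hε.1; nlinarith
        rcases eq_or_ne z q with rfl | hzq
        · rw [hdq]; have := hε.2; nlinarith
        · rw [hd0 z hzp hzq]; simpa using hpos z
      · rw [Finset.sum_add_distrib, hsum, ← Finset.mul_sum, hsumd]; ring
    set F : ℝ → ℝ := fun ε => ∑ x, ∑ y ∈ Finset.univ.erase x,
      v x y * (Real.log (φ x + ε * d x) - Real.log ((φ x + ε * d x) + (φ y + ε * d y))) with hF
    have hFL : ∀ ε : ℝ, F ε = Lf v (fun z => φ z + ε * d z) := fun ε => rfl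
    have hF0 : F 0 = Lf v φ := by
      rw [hFL]; unfold Lf; simp
    have hloc : IsLocalMax F 0 := by
      have hOpen : Set.Ioo (-(φ p)) (φ q) ∈ nhds (0:ℝ) :=
        Ioo_mem_nhds (by have := hpos p; linarith) (hpos q)
      filter_upwards [hOpen] with ε hε
      rw [hF0, hFL]
      have h1 := hmem ε hε
      have h2 := hmax _ h1
      rw [Zf_eq_exp_Lf v _ h1.1, Zf_eq_exp_Lf v φ hpos] at h2
      exact Real.exp_le_exp.mp h2
    set D : ℝ := ∑ x, ∑ y ∈ Finset.univ.erase x,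
      v x y * (d x / φ x - (d x + d y) / (φ x + φ y)) with hD
    have hder : HasDerivAt F D 0 := by
      rw [hF, hD]
      apply HasDerivAt.fun_sum
      intro x _
      apply HasDerivAt.fun_sum
      intro y _
      have h1 : HasDerivAt (fun ε : ℝ => φ x + ε * d x) (d x) 0 := by
        simpa using ((hasDerivAt_id (0:ℝ)).mul_const (d x)).const_add (φ x)
      have h1y : HasDerivAt (fun ε : ℝ => φ y + ε * d y) (d y) 0 := by
        simpa using ((hasDerivAt_id (0:ℝ)).mul_const (d y)).const_add (φ y)
      have h2 : HasDerivAt (fun ε : ℝ => (φ x + ε * d x) + (φ y + ε * d y)) (d x + d y) 0 :=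
        h1.add h1y
      have hl1 := h1.log (by simp; exact (hpos x).ne')
      have hl2 := h2.log (by simp; exact (hsumpos x y).ne')
      have hcomb := (hl1.sub hl2).const_mul (v x y)
      simpa using hcomb
    have hD0 : D = 0 := by
      have h1 := hloc.deriv_eq_zero
      rw [hder.deriv] at h1
      exact h1
    -- now compute D = G p - G q
    have hS1 : ∀ r : S,
        (∑ x, ∑ y ∈ Finset.univ.erase x, v x y * ((if x = r then (1:ℝ) else 0) / φ x))
        = ∑ z ∈ Finset.univ.erase r, v r z / φ r := by
      intro r
      rw [Finset.sum_eq_single r]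
      · apply Finset.sum_congr rfl; intro y _; rw [if_pos rfl]; ring
      · intro b _ hbr; apply Finset.sum_eq_zero; intro y _; rw [if_neg hbr]; ring
      · intro h; exact absurd (Finset.mem_univ r) h
    have hS2 : ∀ r : S,
        (∑ x, ∑ y ∈ Finset.univ.erase x, v x y * ((if x = r then (1:ℝ) else 0) / (φ x + φ y)))
        = ∑ z ∈ Finset.univ.erase r, v r z / (φ r + φ z) := by
      intro r
      rw [Finset.sum_eq_single r]
      · apply Finset.sum_congr rfl; intro y _; rw [if_pos rfl]; ring
      · intro b _ hbr; apply Finset.sum_eq_zero; intro y _; rw [if_neg hbr]; ring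
      · intro h; exact absurd (Finset.mem_univ r) h
    have hS3 : ∀ r : S,
        (∑ x, ∑ y ∈ Finset.univ.erase x, v x y * ((if y = r then (1:ℝ) else 0) / (φ x + φ y)))
        = ∑ z ∈ Finset.univ.erase r, v z r / (φ z + φ r) := by
      intro r
      have hinner : ∀ x : S,
          (∑ y ∈ Finset.univ.erase x, v x y * ((if y = r then (1:ℝ) else 0) / (φ x + φ y)))
          = if x = r then 0 else v x r / (φ x + φ r) := by
        intro x
        rcases eq_or_ne x r with rfl | hxr
        · rw [if_pos rfl]
          apply Finset.sum_eq_zero; intro y hy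
          rw [if_neg (Finset.ne_of_mem_erase hy)]; ring
        · rw [if_neg hxr]
          have : (∑ y ∈ Finset.univ.erase x, v x y * ((if y = r then (1:ℝ) else 0) / (φ x + φ y)))
              = ∑ y ∈ Finset.univ.erase x, if y = r then v x r / (φ x + φ r) else 0 := by
            apply Finset.sum_congr rfl; intro y _
            rcases eq_or_ne y r with rfl | hyr
            · rw [if_pos rfl, if_pos rfl]; ring
            · rw [if_neg hyr, if_neg hyr]; ring
          rw [this, Finset.sum_ite_eq' (Finset.univ.erase x) r,
            if_pos (Finset.mem_erase.mpr ⟨Ne.symm hxr, Finset.mem_univ r⟩)]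
      simp_rw [hinner]
      have : (∑ x : S, if x = r then 0 else v x r / (φ x + φ r))
          = ∑ x : S, if x ≠ r then v x r / (φ x + φ r) else 0 := by
        apply Finset.sum_congr rfl; intro x _
        rcases eq_or_ne x r with rfl | hxr
        · simp
        · rw [if_neg hxr, if_pos hxr]
      rw [this, ← Finset.sum_filter, Finset.filter_ne']
    have hterm : ∀ x y : S, v x y * (d x / φ x - (d x + d y) / (φ x + φ y)) =
        (v x y * ((if x = p then (1:ℝ) else 0) / φ x)
          - v x y * ((if x = q then (1:ℝ) else 0) / φ x))
        - (v x y * ((if x = p then (1:ℝ) else 0) / (φ x + φ y))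
          - v x y * ((if x = q then (1:ℝ) else 0) / (φ x + φ y)))
        - (v x y * ((if y = p then (1:ℝ) else 0) / (φ x + φ y))
          - v x y * ((if y = q then (1:ℝ) else 0) / (φ x + φ y))) := by
      intro x y; simp only [hd]; ring
    have hDval : D = G p - G q := by
      rw [hD]
      simp_rw [hterm]
      simp only [Finset.sum_sub_distrib]
      rw [hS1 p, hS1 q, hS2 p, hS2 q, hS3 p, hS3 q, hGdef]
      ring
    rw [← sub_eq_zero, ← hDval, hD0]
  -- Step B : ∑ r, φ r * G r = 0
  have hzero : ∑ r, φ r * G r = 0 := by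
    have hexp : ∀ r : S, φ r * G r =
        (∑ z ∈ Finset.univ.erase r, v r z)
        - (∑ z ∈ Finset.univ.erase r, v r z * (φ r / (φ r + φ z)))
        - (∑ z ∈ Finset.univ.erase r, v z r * (φ r / (φ z + φ r))) := by
      intro r
      rw [hGdef]
      simp only [mul_sub, Finset.mul_sum]
      congr 1
      · congr 1
        · apply Finset.sum_congr rfl; intro z _
          rw [mul_comm]; exact div_mul_cancel₀ _ (hpos r).ne'
        · apply Finset.sum_congr rfl; intro z _
          rw [mul_div_assoc', mul_comm (φ r) (v r z), mul_div_assoc]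
      · apply Finset.sum_congr rfl; intro z _
        rw [mul_div_assoc', mul_comm (φ r) (v z r), mul_div_assoc]
    simp_rw [hexp]
    simp only [Finset.sum_sub_distrib]
    have hswap : (∑ r, ∑ z ∈ Finset.univ.erase r, v z r * (φ r / (φ z + φ r)))
        = ∑ r, ∑ z ∈ Finset.univ.erase r, v r z * (φ z / (φ r + φ z)) := by
      rw [sum_erase_swap (fun r z => v z r * (φ r / (φ z + φ r)))]
    rw [hswap]
    have hcomb : (∑ r, ∑ z ∈ Finset.univ.erase r, v r z * (φ r / (φ r + φ z)))
        + (∑ r, ∑ z ∈ Finset.univ.erase r, v r z * (φ z / (φ r + φ z)))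
        = ∑ r, ∑ z ∈ Finset.univ.erase r, v r z := by
      rw [← Finset.sum_add_distrib]
      apply Finset.sum_congr rfl; intro r _
      rw [← Finset.sum_add_distrib]
      apply Finset.sum_congr rfl; intro z _
      have h := (hsumpos r z).ne'
      field_simp
    linarith
  -- Step C : G a = 0
  have hGa : G a = 0 := by
    have h1 : G a = ∑ r, φ r * G r := by
      calc G a = G a * ∑ r, φ r := by rw [hsum, mul_one]
      _ = ∑ r, G a * φ r := by rw [Finset.mul_sum]
      _ = ∑ r, φ r * G r := by
          apply Finset.sum_congr rfl; intro r _
          rw [hGpq a r, mul_comm]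
    rw [h1, hzero]
  -- Step D : conclude
  have hexp : φ a * G a =
      (∑ z ∈ Finset.univ.erase a, v a z)
      - (∑ z ∈ Finset.univ.erase a, (v a z + v z a) * (φ a / (φ a + φ z))) := by
    rw [hGdef]
    simp only [mul_sub, Finset.mul_sum]
    have h1 : ∀ z ∈ Finset.univ.erase a, φ a * (v a z / φ a) = v a z := by
      intro z _; rw [mul_comm]; exact div_mul_cancel₀ _ (hpos a).ne'
    rw [Finset.sum_congr rfl h1]
    rw [sub_sub, ← Finset.sum_add_distrib]
    congr 1
    apply Finset.sum_congr rfl; intro z _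
    have h := (hsumpos a z).ne'
    have h' := (hsumpos z a).ne'
    field_simp
    ring
  rw [hGa, mul_zero] at hexp
  linarith [hexp]

end Stmt19
end part3

section part4
open Finset
namespace Stmt19

lemma gfrac_lt_one {u c : ℝ} (hu : 0 < u) (hc : 0 < c) : u / (u + c) < 1 := by
  rw [div_lt_one (by linarith)]; linarith

lemma gfrac_mono {u w c : ℝ} (hu : 0 < u) (hw : 0 < w) (hc : 0 < c) (h : u ≤ w) :
    u / (u + c) ≤ w / (w + c) := by
  rw [div_le_div_iff₀ (by linarith) (by linarith)]; nlinarith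

lemma gfrac_strict {u w c : ℝ} (hu : 0 < u) (hw : 0 < w) (hc : 0 < c) (h : u < w) :
    u / (u + c) < w / (w + c) := by
  rw [div_lt_div_iff₀ (by linarith) (by linarith)]; nlinarith

section linord
variable {S : Type*} [LinearOrder S] {v : S → S → ℝ}

lemma adj_out {a b z : S} (hab : a ⋖ b) (hz : z ≠ a) (hz' : z ≠ b) : z < a ∨ b < z := by
  rcases lt_trichotomy z a with h | h | h
  · exact Or.inl h
  · exact absurd h hz
  · right
    by_contra hbz
    push_neg at hbz
    exact hab.2 h (lt_of_le_of_ne hbz hz')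

lemma row_mono (hclc : CLC v) {a b z : S} (hab : a ⋖ b) (hz : z ≠ a) (hz' : z ≠ b) :
    v b z ≤ v a z := by
  obtain ⟨h1, h2, h3, h4⟩ := hclc
  rcases adj_out hab hz hz' with h | h
  · rw [h3 z a b h hab.lt]; exact min_le_right _ _
  · rw [h2 a b z hab.lt h]; exact le_max_right _ _

lemma col_mono (hclc : CLC v) {a b z : S} (hab : a ⋖ b) (hz : z ≠ a) (hz' : z ≠ b) :
    v z a ≤ v z b := by
  obtain ⟨h1, h2, h3, h4⟩ := hclc
  rcases adj_out hab hz hz' with h | h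
  · rw [h2 z a b h hab.lt]; exact le_max_left _ _
  · rw [h3 a b z hab.lt h]; exact min_le_left _ _

lemma t_mono (hclc : CLC v) {a b z : S} (hab : a ⋖ b) (hz : z ≠ a) (hz' : z ≠ b) :
    v b z + v z b ≤ v a z + v z a := by
  have := (hclc.2.2.2 a b z hab hz hz').1
  linarith

end linord

lemma erase_decomp {S : Type*} [Fintype S] [DecidableEq S] (f : S → ℝ) {a b : S} (hab : a ≠ b) :
    ∑ z ∈ Finset.univ.erase a, f z = f b + ∑ z ∈ (Finset.univ.erase a).erase b, f z :=
  (Finset.add_sum_erase _ f (Finset.mem_erase.mpr ⟨Ne.symm hab, Finset.mem_univ b⟩)).symm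

section main
variable {S : Type*} [LinearOrder S] [Fintype S] [DecidableEq S]

/-- Weak monotonicity of row sums for adjacent pairs (no stationarity needed). -/
lemma adj_sum_le {v : S → S → ℝ} (hclc : CLC v) {a b : S} (hab : a ⋖ b) :
    ∑ z ∈ Finset.univ.erase b, v b z ≤ ∑ z ∈ Finset.univ.erase a, v a z := by
  have hne : a ≠ b := hab.lt.ne
  rw [erase_decomp (fun z => v a z) hne, erase_decomp (fun z => v b z) hne.symm,
    show ((Finset.univ.erase b).erase a : Finset S) = (Finset.univ.erase a).erase b from
      Finset.erase_right_comm (a := b) (b := a)]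
  have h1 : v b a ≤ v a b := hclc.1 a b hab.lt
  have h2 : ∑ z ∈ (Finset.univ.erase a).erase b, v b z
      ≤ ∑ z ∈ (Finset.univ.erase a).erase b, v a z := by
    apply Finset.sum_le_sum
    intro z hz
    have hz2 := Finset.mem_erase.mp hz
    have hz3 := Finset.mem_erase.mp hz2.2
    exact row_mono hclc hab hz3.1 hz2.1
  linarith

/-- Main adjacent-pair engine, using the stationarity equations. -/
lemma adj_engine (hS : 2 ≤ Fintype.card S) {v : S → S → ℝ}
    (hv : IsLlull v) (hclc : CLC v)
    (hirr : ∀ x y : S, x ≠ y → 0 < iScore v x y)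
    {φ : S → ℝ} (hφ : φ ∈ simplexPos S)
    (hmax : ∀ ψ ∈ simplexPos S, Zf v ψ ≤ Zf v φ)
    {a b : S} (hab : a ⋖ b) :
    (φ a < φ b → False) ∧
    (φ b < φ a → ∑ z ∈ Finset.univ.erase b, v b z < ∑ z ∈ Finset.univ.erase a, v a z) := by
  have hpos := hφ.1
  have hne : a ≠ b := hab.lt.ne
  have hsumpos : ∀ x z : S, (0:ℝ) < φ x + φ z := fun x z => by
    have := hpos x; have := hpos z; linarith
  have sa := stationarity v φ hφ hmax a
  have sb := stationarity v φ hφ hmax b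
  rw [erase_decomp (fun z => v a z) hne,
    erase_decomp (fun z => (v a z + v z a) * (φ a / (φ a + φ z))) hne] at sa
  rw [erase_decomp (fun z => v b z) hne.symm,
    erase_decomp (fun z => (v b z + v z b) * (φ b / (φ b + φ z))) hne.symm,
    show ((Finset.univ.erase b).erase a : Finset S) = (Finset.univ.erase a).erase b from
      Finset.erase_right_comm (a := b) (b := a)] at sb
  set E : Finset S := (Finset.univ.erase a).erase b with hE
  have hmemE : ∀ z ∈ E, z ≠ a ∧ z ≠ b := by
    intro z hz
    have hz2 := Finset.mem_erase.mp hz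
    have hz3 := Finset.mem_erase.mp hz2.2
    exact ⟨hz3.1, hz2.1⟩
  have hvab : 0 ≤ v a b := (hv a b hne).1
  have hvba : 0 ≤ v b a := (hv b a hne.symm).1
  have hmba : v b a ≤ v a b := hclc.1 a b hab.lt
  obtain ⟨z0, hz0b, hz0pos⟩ := exists_pos_entry hS v hirr b
  have hgba : φ b / (φ b + φ a) = φ b / (φ a + φ b) := by rw [add_comm]
  rw [hgba] at sb
  -- split the sums in sa and sb
  constructor
  · -- Part 1 : φ a < φ b is impossible
    intro hcon
    have hkey : ∀ z ∈ E, (v a z + v z a) * (φ a / (φ a + φ z)) + v b z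
        ≤ v a z + (v b z + v z b) * (φ b / (φ b + φ z)) := by
      intro z hz
      obtain ⟨hza, hzb⟩ := hmemE z hz
      have h1 : 0 ≤ v b z := (hv b z hzb.symm).1
      have h2 : 0 ≤ v z b := (hv z b hzb).1
      have h3 : v b z + v z b ≤ v a z + v z a := t_mono hclc hab hza hzb
      have h4 : v z a ≤ v z b := col_mono hclc hab hza hzb
      have hga : φ a / (φ a + φ z) ≤ φ b / (φ b + φ z) :=
        gfrac_mono (hpos a) (hpos b) (hpos z) hcon.le
      have hga1 : φ a / (φ a + φ z) < 1 := gfrac_lt_one (hpos a) (hpos z)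
      have hA : ((v a z + v z a) - (v b z + v z b)) * (φ a / (φ a + φ z))
          ≤ (v a z + v z a) - (v b z + v z b) :=
        mul_le_of_le_one_right (by linarith) hga1.le
      have hB : 0 ≤ (v b z + v z b) * (φ b / (φ b + φ z) - φ a / (φ a + φ z)) :=
        mul_nonneg (by linarith) (by linarith)
      nlinarith [hA, hB]
    rcases eq_or_ne z0 a with heq | hz0a
    · -- the pair term is strictly smaller for a
      rw [heq] at hz0pos
      have ht : 0 < v a b + v b a := by linarith
      have h2 : φ a / (φ a + φ b) < φ b / (φ a + φ b) :=
        div_lt_div_of_pos_right hcon (hsumpos a b)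
      have hpair : (v a b + v b a) * (φ a / (φ a + φ b))
          < (v b a + v a b) * (φ b / (φ a + φ b)) := by
        nlinarith [mul_lt_mul_of_pos_left h2 ht]
      have hsumE := Finset.sum_le_sum hkey
      rw [Finset.sum_add_distrib, Finset.sum_add_distrib] at hsumE
      linarith [sa, sb, hsumE, hpair, hmba]
    · have hz0E : z0 ∈ E :=
        Finset.mem_erase.mpr ⟨hz0b, Finset.mem_erase.mpr ⟨hz0a, Finset.mem_univ z0⟩⟩
      have hstrict : (v a z0 + v z0 a) * (φ a / (φ a + φ z0)) + v b z0
          < v a z0 + (v b z0 + v z0 b) * (φ b / (φ b + φ z0)) := by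
        have h2 : 0 ≤ v z0 b := (hv z0 b hz0b).1
        have htb : 0 < v b z0 + v z0 b := by linarith
        have h3 : v b z0 + v z0 b ≤ v a z0 + v z0 a := t_mono hclc hab hz0a hz0b
        have h4 : v z0 a ≤ v z0 b := col_mono hclc hab hz0a hz0b
        have hgalt : φ a / (φ a + φ z0) < φ b / (φ b + φ z0) :=
          gfrac_strict (hpos a) (hpos b) (hpos z0) hcon
        have hga1 : φ a / (φ a + φ z0) < 1 := gfrac_lt_one (hpos a) (hpos z0)
        have hA : ((v a z0 + v z0 a) - (v b z0 + v z0 b)) * (φ a / (φ a + φ z0))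
            ≤ (v a z0 + v z0 a) - (v b z0 + v z0 b) :=
          mul_le_of_le_one_right (by linarith) hga1.le
        have hB : 0 < (v b z0 + v z0 b) * (φ b / (φ b + φ z0) - φ a / (φ a + φ z0)) :=
          mul_pos htb (by linarith)
        nlinarith [hA, hB]
      have hsumE := Finset.sum_lt_sum hkey ⟨z0, hz0E, hstrict⟩
      rw [Finset.sum_add_distrib, Finset.sum_add_distrib] at hsumE
      have h2 : φ a / (φ a + φ b) < φ b / (φ a + φ b) :=
        div_lt_div_of_pos_right hcon (hsumpos a b)
      have hpair : (v a b + v b a) * (φ a / (φ a + φ b))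
          ≤ (v b a + v a b) * (φ b / (φ a + φ b)) := by
        nlinarith [mul_le_mul_of_nonneg_left h2.le (by linarith : (0:ℝ) ≤ v a b + v b a)]
      linarith [sa, sb, hsumE, hpair, hmba]
  · -- Part 2 : φ b < φ a gives strict row-sum comparison
    intro hcon
    rw [erase_decomp (fun z => v a z) hne, erase_decomp (fun z => v b z) hne.symm,
      show ((Finset.univ.erase b).erase a : Finset S) = E from
        Finset.erase_right_comm (a := b) (b := a)]
    have hkey : ∀ z ∈ E, (v b z + v z b) * (φ b / (φ b + φ z))
        ≤ (v a z + v z a) * (φ a / (φ a + φ z)) := by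
      intro z hz
      obtain ⟨hza, hzb⟩ := hmemE z hz
      have h1 : 0 ≤ v b z := (hv b z hzb.symm).1
      have h2 : 0 ≤ v z b := (hv z b hzb).1
      have h3 : v b z + v z b ≤ v a z + v z a := t_mono hclc hab hza hzb
      have hgb : φ b / (φ b + φ z) ≤ φ a / (φ a + φ z) :=
        gfrac_mono (hpos b) (hpos a) (hpos z) hcon.le
      have hgb0 : 0 ≤ φ b / (φ b + φ z) := div_nonneg (hpos b).le (hsumpos b z).le
      exact mul_le_mul h3 hgb hgb0 (by linarith)
    have h2 : φ b / (φ a + φ b) < φ a / (φ a + φ b) :=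
      div_lt_div_of_pos_right hcon (hsumpos a b)
    rcases eq_or_ne z0 a with heq | hz0a
    · rw [heq] at hz0pos
      have ht : 0 < v a b + v b a := by linarith
      have hpair : (v b a + v a b) * (φ b / (φ a + φ b))
          < (v a b + v b a) * (φ a / (φ a + φ b)) := by
        nlinarith [mul_lt_mul_of_pos_left h2 ht]
      have hsumE := Finset.sum_le_sum hkey
      linarith [sa, sb, hsumE, hpair]
    · have hz0E : z0 ∈ E :=
        Finset.mem_erase.mpr ⟨hz0b, Finset.mem_erase.mpr ⟨hz0a, Finset.mem_univ z0⟩⟩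
      have hstrict : (v b z0 + v z0 b) * (φ b / (φ b + φ z0))
          < (v a z0 + v z0 a) * (φ a / (φ a + φ z0)) := by
        have h2' : 0 ≤ v z0 b := (hv z0 b hz0b).1
        have htb : 0 < v b z0 + v z0 b := by linarith
        have h3 : v b z0 + v z0 b ≤ v a z0 + v z0 a := t_mono hclc hab hz0a hz0b
        have hgalt : φ b / (φ b + φ z0) < φ a / (φ a + φ z0) :=
          gfrac_strict (hpos b) (hpos a) (hpos z0) hcon
        have hga0 : 0 ≤ φ a / (φ a + φ z0) := div_nonneg (hpos a).le (hsumpos a z0).le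
        calc (v b z0 + v z0 b) * (φ b / (φ b + φ z0))
            < (v b z0 + v z0 b) * (φ a / (φ a + φ z0)) :=
              mul_lt_mul_of_pos_left hgalt htb
          _ ≤ (v a z0 + v z0 a) * (φ a / (φ a + φ z0)) :=
              mul_le_mul_of_nonneg_right h3 hga0
      have hsumE := Finset.sum_lt_sum hkey ⟨z0, hz0E, hstrict⟩
      have hpair : (v b a + v a b) * (φ b / (φ a + φ b))
          ≤ (v a b + v b a) * (φ a / (φ a + φ b)) := by
        nlinarith [mul_le_mul_of_nonneg_left h2.le (by linarith : (0:ℝ) ≤ v a b + v b a)]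
      linarith [sa, sb, hsumE, hpair]

end main
end Stmt19
end part4

section part5
open Finset
namespace Stmt19
variable {S : Type*} [LinearOrder S] [Fintype S] [DecidableEq S]

lemma exists_cover {x y : S} (h : x < y) : ∃ c, x ⋖ c ∧ c ≤ y := by
  obtain ⟨c, hc⟩ := exists_covBy_of_wellFoundedLT (a := x) (not_isMax_of_lt h)
  refine ⟨c, hc, ?_⟩
  by_contra hyc
  push_neg at hyc
  exact hc.2 h hyc

lemma filter_card_lt {x c : S} (hxc : x < c) :
    (Finset.univ.filter (fun z => c < z)).card
      < (Finset.univ.filter (fun z => x < z)).card := by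
  apply Finset.card_lt_card
  apply (Finset.ssubset_iff_of_subset ?_).mpr
  · exact ⟨c, Finset.mem_filter.mpr ⟨Finset.mem_univ c, hxc⟩,
      fun hcc => lt_irrefl c (Finset.mem_filter.mp hcc).2⟩
  · intro z hz
    exact Finset.mem_filter.mpr ⟨Finset.mem_univ z, hxc.trans (Finset.mem_filter.mp hz).2⟩

variable (hS : 2 ≤ Fintype.card S) {v : S → S → ℝ}
  (hv : IsLlull v) (hclc : CLC v)
  (hirr : ∀ x y : S, x ≠ y → 0 < iScore v x y)
  {φ : S → ℝ} (hφ : φ ∈ simplexPos S)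
  (hmax : ∀ ψ ∈ simplexPos S, Zf v ψ ≤ Zf v φ)

include hS hv hclc hirr hφ hmax in
lemma chain_phi : ∀ n : ℕ, ∀ x y : S, (Finset.univ.filter (fun z => x < z)).card ≤ n → x < y → φ y ≤ φ x := by
  intro n
  induction n with
  | zero =>
    intro x y hc hxy
    have : 0 < (Finset.univ.filter (fun z => x < z)).card :=
      Finset.card_pos.mpr ⟨y, Finset.mem_filter.mpr ⟨Finset.mem_univ y, hxy⟩⟩
    omega
  | succ n ih =>
    intro x y hc hxy
    obtain ⟨c, hxc, hcy⟩ := exists_cover hxy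
    have h1 : φ c ≤ φ x := by
      by_contra hcon
      push_neg at hcon
      exact (adj_engine hS hv hclc hirr hφ hmax hxc).1 hcon
    rcases eq_or_lt_of_le hcy with heq | hcy'
    · rw [← heq]; exact h1
    · have hcard : (Finset.univ.filter (fun z => c < z)).card ≤ n := by
        have := filter_card_lt hxc.lt
        omega
      exact (ih c y hcard hcy').trans h1

include hclc in
lemma chain_sum_le : ∀ n : ℕ, ∀ x y : S, (Finset.univ.filter (fun z => x < z)).card ≤ n → x < y →
    ∑ z ∈ Finset.univ.erase y, v y z ≤ ∑ z ∈ Finset.univ.erase x, v x z := by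
  intro n
  induction n with
  | zero =>
    intro x y hc hxy
    have : 0 < (Finset.univ.filter (fun z => x < z)).card :=
      Finset.card_pos.mpr ⟨y, Finset.mem_filter.mpr ⟨Finset.mem_univ y, hxy⟩⟩
    omega
  | succ n ih =>
    intro x y hc hxy
    obtain ⟨c, hxc, hcy⟩ := exists_cover hxy
    have h1 := adj_sum_le hclc hxc
    rcases eq_or_lt_of_le hcy with heq | hcy'
    · rw [← heq]; exact h1
    · have hcard : (Finset.univ.filter (fun z => c < z)).card ≤ n := by
        have := filter_card_lt hxc.lt
        omega
      exact (ih c y hcard hcy').trans h1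

include hS hv hclc hirr hφ hmax in
lemma chain_strict : ∀ n : ℕ, ∀ x y : S, (Finset.univ.filter (fun z => x < z)).card ≤ n → x < y → φ y < φ x →
    ∑ z ∈ Finset.univ.erase y, v y z < ∑ z ∈ Finset.univ.erase x, v x z := by
  intro n
  induction n with
  | zero =>
    intro x y hc hxy _
    have : 0 < (Finset.univ.filter (fun z => x < z)).card :=
      Finset.card_pos.mpr ⟨y, Finset.mem_filter.mpr ⟨Finset.mem_univ y, hxy⟩⟩
    omega
  | succ n ih =>
    intro x y hc hxy hphi
    obtain ⟨c, hxc, hcy⟩ := exists_cover hxy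
    have h1 : φ c ≤ φ x := by
      by_contra hcon
      push_neg at hcon
      exact (adj_engine hS hv hclc hirr hφ hmax hxc).1 hcon
    rcases eq_or_lt_of_le hcy with heq | hcy'
    · subst heq
      exact (adj_engine hS hv hclc hirr hφ hmax hxc).2 hphi
    · have hcard : (Finset.univ.filter (fun z => c < z)).card ≤ n := by
        have := filter_card_lt hxc.lt
        omega
      rcases lt_or_eq_of_le h1 with h2 | h2
      · have h3 := (adj_engine hS hv hclc hirr hφ hmax hxc).2 h2
        have h4 := chain_sum_le hclc n c y hcard hcy'
        linarith
      · have h5 : φ y < φ c := by rw [h2]; exact hphi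
        have h3 := ih c y hcard hcy' h5
        have h4 := adj_sum_le hclc hxc
        linarith

end Stmt19
end part5

/-- For an irreducible Llull matrix with CLC structure, the Zermelo strengths
(the maximizer of `F` on the open simplex) satisfy: `φ x > φ y ⟹ ρ x > ρ y`. -/
theorem stmt19 {S : Type*} [LinearOrder S] [Fintype S] [DecidableEq S]
    (hS : 2 ≤ Fintype.card S)
    (v : S → S → ℝ) (hv : IsLlull v) (hclc : CLC v)
    (hirr : ∀ x y : S, x ≠ y → 0 < iScore v x y)
    (φ : S → ℝ) (hφ : φ ∈ simplexPos S)
    (hmax : ∀ ψ ∈ simplexPos S, Zf v ψ ≤ Zf v φ)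
    (x y : S) (h : φ y < φ x) : mps v y < mps v x := by
  rcases lt_trichotomy x y with hlt | heq | hgt
  · have hsum := Stmt19.chain_strict hS hv hclc hirr hφ hmax
      (Finset.univ.filter (fun z => x < z)).card x y le_rfl hlt h
    unfold mps
    have hN : (0:ℝ) < (Fintype.card S : ℝ) - 1 := by
      have : (2:ℝ) ≤ (Fintype.card S : ℝ) := by exact_mod_cast hS
      linarith
    exact mul_lt_mul_of_pos_left hsum (inv_pos.mpr hN)
  · subst heq; exact absurd h (lt_irrefl _)
  · have := Stmt19.chain_phi hS hv hclc hirr hφ hmax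
      (Finset.univ.filter (fun z => y < z)).card y x le_rfl hgt
    linarith
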